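/- For fixed r ≥ 1 and n ≥ 0, substituting t = [rm+1]_q in the r-colored q-Stirling expansion gives: [rm+1]_q^n = Σ_{k=0}^{n} q^{r·binom(k+1,2) + (1-r)k} · [r]_q^k · [k]_{q^r}! · S_r[n,k] · qbinom(m,k)_{q^r} for all m ≥ 0. -/

import Mathlib

open Finset LaurentPolynomial

/-- `[m]_q = 1 + q + ... + q^{m-1}`. -/
def qnat {R : Type*} [CommRing R] (q : R) (m : ℕ) : R := ∑ i ∈ Finset.range m, q ^ i

/-- `[k]_q! = [1]_q [2]_q ⋯ [k]_q`. -/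
def qfact {R : Type*} [CommRing R] (q : R) (k : ℕ) : R := ∏ i ∈ Finset.range k, qnat q (i + 1)

/-- The Gaussian binomial coefficient, as a polynomial expression in `q`. -/
def qbin {R : Type*} [CommRing R] (q : R) : ℕ → ℕ → R
  | 0, 0 => 1
  | 0, _ + 1 => 0
  | _ + 1, 0 => 1
  | n + 1, k + 1 => qbin q n k + q ^ (k + 1) * qbin q n (k + 1)

/-- The r-colored q-Stirling numbers of the second kind, as Laurent polynomials in `q`:
`S_r[n,k] = S_r[n-1,k-1] + [rk+1]_q S_r[n-1,k]`, `S_r[0,k] = δ_{0k}`. -/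
noncomputable def qStirR (r : ℕ) : ℕ → ℕ → LaurentPolynomial ℤ
  | 0, 0 => 1
  | 0, _ + 1 => 0
  | n + 1, 0 => qnat (T 1) (r * 0 + 1) * qStirR r n 0
  | n + 1, k + 1 => qStirR r n k + qnat (T 1) (r * (k + 1) + 1) * qStirR r n (k + 1)

section Aux

variable {R : Type*} [CommRing R] (q : R)

lemma qnat_zero : qnat q 0 = 0 := by simp [qnat]

lemma qnat_one : qnat q 1 = 1 := by simp [qnat]

lemma qnat_add (a b : ℕ) : qnat q (a + b) = qnat q a + q ^ a * qnat q b := by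
  simp [qnat, Finset.sum_range_add, Finset.mul_sum, pow_add]

lemma qnat_succ (a : ℕ) : qnat q (a + 1) = 1 + q * qnat q a := by
  rw [add_comm a 1, qnat_add, qnat_one, pow_one]

lemma qnat_mul (r j : ℕ) : qnat q (r * j) = qnat q r * qnat (q ^ r) j := by
  induction j with
  | zero => simp [qnat_zero]
  | succ j ih =>
    rw [Nat.mul_succ, qnat_add, ih, qnat_add (q ^ r) j 1, qnat_one, pow_mul]
    ring

lemma qbin_zero_right : ∀ m : ℕ, qbin q m 0 = 1
  | 0 => rfl
  | _ + 1 => rfl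

lemma qbin_eq_zero : ∀ m k : ℕ, m < k → qbin q m k = 0
  | 0, _ + 1, _ => rfl
  | m + 1, k + 1, h => by
    rw [qbin, qbin_eq_zero m k (by omega), qbin_eq_zero m (k + 1) (by omega)]
    ring

lemma qbin_mul_qnat : ∀ m k : ℕ, qnat q (m - k) * qbin q m k = qnat q (k + 1) * qbin q m (k + 1)
  | 0, 0 => by simp [qnat_zero, qbin_eq_zero q 0 1 (by omega)]
  | 0, k + 1 => by simp [qnat_zero, qbin_eq_zero q 0 (k + 2) (by omega)]
  | m + 1, 0 => by
    have ih := qbin_mul_qnat m 0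
    rw [qbin_zero_right, Nat.sub_zero, mul_one, qnat_one, one_mul] at ih
    show qnat q (m + 1 - 0) * qbin q (m + 1) 0 =
      qnat q 1 * (qbin q m 0 + q ^ (0 + 1) * qbin q m (0 + 1))
    rw [Nat.sub_zero, qbin_zero_right, qnat_one, qbin_zero_right, ← ih, qnat_succ]
    ring
  | m + 1, k + 1 => by
    rcases le_or_gt (m + 1) (k + 1) with h | h
    · rw [Nat.sub_eq_zero_of_le h, qnat_zero, zero_mul,
        qbin_eq_zero q (m + 1) (k + 2) (by omega), mul_zero]
    · have ih1 := qbin_mul_qnat m k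
      have ih2 := qbin_mul_qnat m (k + 1)
      show qnat q (m + 1 - (k + 1)) * (qbin q m k + q ^ (k + 1) * qbin q m (k + 1)) =
        qnat q (k + 2) * (qbin q m (k + 1) + q ^ (k + 2) * qbin q m (k + 2))
      have hmk : m + 1 - (k + 1) = m - k := by omega
      have hmk' : m - k = (m - (k + 1)) + 1 := by omega
      have e2 : qnat q (k + 2) = qnat q (k + 1) + q ^ (k + 1) := by
        rw [qnat_add q (k + 1) 1, qnat_one, mul_one]
      rw [mul_add, hmk, ih1]
      have ha : qnat q (m - k) = 1 + q * qnat q (m - (k + 1)) := by rw [hmk', qnat_succ]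
      rw [ha]
      calc qnat q (k + 1) * qbin q m (k + 1) +
            (1 + q * qnat q (m - (k + 1))) * (q ^ (k + 1) * qbin q m (k + 1))
          = (qnat q (k + 1) + q ^ (k + 1)) * qbin q m (k + 1) +
            q ^ (k + 2) * (qnat q (m - (k + 1)) * qbin q m (k + 1)) := by ring
        _ = qnat q (k + 2) * (qbin q m (k + 1) + q ^ (k + 2) * qbin q m (k + 2)) := by
            rw [ih2, e2]; ring

end Aux

lemma qStirR_eq_zero (r : ℕ) : ∀ n k : ℕ, n < k → qStirR r n k = 0
  | 0, _ + 1, _ => rfl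
  | n + 1, k + 1, h => by
    rw [qStirR, qStirR_eq_zero r n k (by omega), qStirR_eq_zero r n (k + 1) (by omega)]
    ring

/-- Key splitting identity. -/
lemma key_split (r m k : ℕ) :
    qnat (T 1 : LaurentPolynomial ℤ) (r * m + 1) * qbin (T (r : ℤ)) m k =
      qnat (T 1 : LaurentPolynomial ℤ) (r * k + 1) * qbin (T (r : ℤ)) m k +
        T ((r : ℤ) * k + 1) * qnat (T 1 : LaurentPolynomial ℤ) r *
          (qnat (T (r : ℤ)) (k + 1) * qbin (T (r : ℤ)) m (k + 1)) := by
  have hT : (T (r : ℤ) : LaurentPolynomial ℤ) = (T 1 : LaurentPolynomial ℤ) ^ r := by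
    rw [T_pow, mul_one]
  rcases le_or_gt k m with h | h
  · have hsplit : r * m + 1 = (r * k + 1) + r * (m - k) := by
      have : r * m = r * k + r * (m - k) := by rw [← Nat.mul_add]; congr 1; omega
      omega
    have hpow : (T 1 : LaurentPolynomial ℤ) ^ (r * k + 1) = T ((r : ℤ) * k + 1) := by
      rw [T_pow]; congr 1; push_cast; ring
    rw [hsplit, qnat_add, qnat_mul, ← hT, add_mul, mul_assoc, ← qbin_mul_qnat, hpow]
    ring
  · rw [qbin_eq_zero _ m k h, qbin_eq_zero _ m (k + 1) (by omega)]; ring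

theorem stmt18 (r n m : ℕ) (hr : 1 ≤ r) :
    qnat (T 1 : LaurentPolynomial ℤ) (r * m + 1) ^ n =
      ∑ k ∈ Finset.range (n + 1),
        T ((r : ℤ) * (Nat.choose (k + 1) 2 : ℤ) + (1 - (r : ℤ)) * (k : ℤ)) *
          qnat (T 1 : LaurentPolynomial ℤ) r ^ k * qfact (T (r : ℤ) : LaurentPolynomial ℤ) k *
          qStirR r n k * qbin (T (r : ℤ) : LaurentPolynomial ℤ) m k := by
  set q : LaurentPolynomial ℤ := T 1 with hq
  set Q : LaurentPolynomial ℤ := T (r : ℤ) with hQ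
  set c : ℕ → LaurentPolynomial ℤ := fun k =>
    T ((r : ℤ) * (Nat.choose (k + 1) 2 : ℤ) + (1 - (r : ℤ)) * (k : ℤ)) *
      qnat q r ^ k * qfact Q k with hc
  have hcsucc : ∀ k : ℕ, c (k + 1) = T ((r : ℤ) * k + 1) * qnat q r * qnat Q (k + 1) * c k := by
    intro k
    simp only [hc, qfact, Finset.prod_range_succ]
    have hch : ((r : ℤ) * (Nat.choose (k + 1 + 1) 2 : ℤ) + (1 - (r : ℤ)) * ((k + 1 : ℕ) : ℤ)) =
        ((r : ℤ) * k + 1) + ((r : ℤ) * (Nat.choose (k + 1) 2 : ℤ) + (1 - (r : ℤ)) * (k : ℤ)) := by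
      have h2 : Nat.choose (k + 1 + 1) 2 = Nat.choose (k + 1) 2 + (k + 1) := by
        rw [Nat.choose_succ_succ, Nat.choose_one_right, Nat.add_comm]
      rw [h2]; push_cast; ring
    rw [hch, T_add, pow_succ]
    ring
  induction n with
  | zero =>
    have hS : qStirR r 0 0 = 1 := rfl
    have hch : (Nat.choose 1 2 : ℕ) = 0 := by decide
    simp [pow_zero, Finset.sum_range_one, qbin_zero_right, hS, hch, qfact]
  | succ n ih =>
    have hL : qnat q (r * m + 1) ^ (n + 1) =
        ∑ k ∈ Finset.range (n + 1), c k * qStirR r n k * qbin Q m k * qnat q (r * m + 1) := by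
      rw [pow_succ, ih, Finset.sum_mul]
    rw [hL]
    set h : ℕ → LaurentPolynomial ℤ :=
      fun k => c k * qnat q (r * k + 1) * qStirR r n k * qbin Q m k with hh
    set g : ℕ → LaurentPolynomial ℤ :=
      fun k => c (k + 1) * qStirR r n k * qbin Q m (k + 1) with hg
    have step : ∀ k : ℕ, c k * qStirR r n k * qbin Q m k * qnat q (r * m + 1) = h k + g k := by
      intro k
      have := key_split r m k
      rw [← hq, ← hQ] at this
      calc c k * qStirR r n k * qbin Q m k * qnat q (r * m + 1)
          = c k * qStirR r n k * (qnat q (r * m + 1) * qbin Q m k) := by ring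
        _ = c k * qStirR r n k * (qnat q (r * k + 1) * qbin Q m k +
              T ((r : ℤ) * k + 1) * qnat q r * (qnat Q (k + 1) * qbin Q m (k + 1))) := by
            rw [this]
        _ = h k + (T ((r : ℤ) * k + 1) * qnat q r * qnat Q (k + 1) * c k) *
              qStirR r n k * qbin Q m (k + 1) := by simp only [hh]; ring
        _ = h k + g k := by rw [← hcsucc]
    rw [Finset.sum_congr rfl (fun k _ => step k), Finset.sum_add_distrib]
    -- now handle RHS
    have hF : ∀ k : ℕ, c (k + 1) * qStirR r (n + 1) (k + 1) * qbin Q m (k + 1) =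
        g k + h (k + 1) := by
      intro k
      show c (k + 1) * (qStirR r n k + qnat (T 1) (r * (k + 1) + 1) * qStirR r n (k + 1)) *
          qbin Q m (k + 1) = g k + h (k + 1)
      rw [← hq]
      simp only [hg, hh]; ring
    have hF0 : c 0 * qStirR r (n + 1) 0 * qbin Q m 0 = h 0 := by
      show c 0 * (qnat (T 1) (r * 0 + 1) * qStirR r n 0) * qbin Q m 0 = h 0
      rw [← hq]
      simp only [hh, Nat.mul_zero]; ring
    rw [Finset.sum_range_succ' _ (n + 1)]
    show _ = ∑ k ∈ Finset.range (n + 1), c (k + 1) * qStirR r (n + 1) (k + 1) * qbin Q m (k + 1) +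
      c 0 * qStirR r (n + 1) 0 * qbin Q m 0
    simp only [hF, hF0]
    rw [Finset.sum_add_distrib]
    have hhsum : ∑ k ∈ Finset.range (n + 1), h (k + 1) + h 0 =
        ∑ k ∈ Finset.range (n + 1), h k := by
      rw [← Finset.sum_range_succ' h (n + 1), Finset.sum_range_succ]
      have : h (n + 1) = 0 := by
        simp only [hh, qStirR_eq_zero r n (n + 1) (by omega)]; ring
      rw [this, add_zero]
    rw [← hhsum]
    ring
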